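/- Let u : T² → ℝ be a function on the 2-torus of class H². Then there is a constant C, independent of u, such that ‖u‖_{L∞} ≤ C ‖u‖_{L²}^{1/2} ‖u‖_{H²}^{1/2} (two-dimensional Agmon inequality). -/

import Mathlib

open MeasureTheory

noncomputable section

/-- The fundamental domain of the torus `T² = ℝ²/ℤ²`. -/
def box2 : Set (Fin 2 → ℝ) := Set.univ.pi fun _ => Set.Ico (0 : ℝ) 1

/-- A function on `ℝ²` descends to the torus `T² = ℝ²/ℤ²` iff it is `ℤ²`-periodic. -/
def IsPeriodic2 {V : Type*} (u : (Fin 2 → ℝ) → V) : Prop :=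
  ∀ (x : Fin 2 → ℝ) (k : Fin 2 → ℤ), u (x + fun i => (k i : ℝ)) = u x

/-- The `L²(T²)` norm. -/
def L2Norm2 (u : (Fin 2 → ℝ) → ℝ) : ℝ := (∫ x in box2, (u x) ^ 2) ^ ((1 : ℝ) / 2)

/-- The `H²(T²)` norm. -/
def H2Norm2 (u : (Fin 2 → ℝ) → ℝ) : ℝ :=
  (∑ k ∈ Finset.range 3, ∫ x in box2, ‖iteratedFDeriv ℝ k u x‖ ^ 2) ^ ((1 : ℝ) / 2)

/-- The `L∞(T²)` norm (for continuous periodic functions). -/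
def LinfNorm2 (u : (Fin 2 → ℝ) → ℝ) : ℝ := ⨆ x : Fin 2 → ℝ, |u x|

/-! ### Auxiliary 1D lemmas -/

lemma oned_bound {f : ℝ → ℝ} (hf : ContDiff ℝ 1 f) {x : ℝ} (hx : x ∈ Set.Icc (0:ℝ) 1) :
    |f x| ≤ (∫ t in (0:ℝ)..1, |f t|) + ∫ t in (0:ℝ)..1, |deriv f t| := by
  set K := ∫ t in (0:ℝ)..1, |deriv f t| with hK
  have hdc : Continuous (deriv f) := hf.continuous_deriv le_rfl
  have hfc : Continuous f := hf.continuous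
  have key : ∀ t ∈ Set.Icc (0:ℝ) 1, |f x| ≤ |f t| + K := by
    intro t ht
    have hftc : ∫ s in t..x, deriv f s = f x - f t :=
      intervalIntegral.integral_deriv_eq_sub (fun s _ => hf.differentiable one_ne_zero s)
        ((hdc.intervalIntegrable _ _))
    have h1 : |f x| ≤ |f t| + |∫ s in t..x, deriv f s| := by
      calc |f x| = |f t + (f x - f t)| := by ring_nf
        _ ≤ |f t| + |f x - f t| := abs_add_le _ _
        _ = |f t| + |∫ s in t..x, deriv f s| := by rw [hftc]
    refine h1.trans (add_le_add_right ?_ _)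
    have habs : |∫ s in t..x, deriv f s| ≤ |(∫ s in t..x, abs (deriv f s))| := by
      simpa [Real.norm_eq_abs] using intervalIntegral.norm_integral_le_abs_integral_norm
        (f := deriv f) (a := t) (b := x) (μ := volume)
    refine habs.trans ?_
    rcases le_total t x with h | h
    · rw [abs_of_nonneg (intervalIntegral.integral_nonneg h (fun s _ => abs_nonneg _))]
      exact intervalIntegral.integral_mono_interval ht.1 h hx.2
        (Filter.Eventually.of_forall fun s => abs_nonneg _)
        ((hdc.abs.intervalIntegrable _ _))
    · rw [intervalIntegral.integral_symm, abs_neg,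
        abs_of_nonneg (intervalIntegral.integral_nonneg h (fun s _ => abs_nonneg _))]
      exact intervalIntegral.integral_mono_interval hx.1 h ht.2
        (Filter.Eventually.of_forall fun s => abs_nonneg _)
        ((hdc.abs.intervalIntegrable _ _))
  have : |f x| = ∫ t in (0:ℝ)..1, |f x| := by simp
  rw [this]
  calc ∫ t in (0:ℝ)..1, |f x| ≤ ∫ t in (0:ℝ)..1, (|f t| + K) := by
        apply intervalIntegral.integral_mono_on zero_le_one
          (intervalIntegrable_const) ((hfc.abs.intervalIntegrable _ _).add
            (intervalIntegrable_const)) (fun t ht => key t ht)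
    _ = (∫ t in (0:ℝ)..1, |f t|) + K := by
        rw [intervalIntegral.integral_add (hfc.abs.intervalIntegrable _ _)
          intervalIntegrable_const]
        simp

lemma oned_ibp {f : ℝ → ℝ} (hf : ContDiff ℝ 2 f) (hper : Function.Periodic f 1) :
    ∫ t in (0:ℝ)..1, (deriv f t)^2 = - ∫ t in (0:ℝ)..1, f t * deriv (deriv f) t := by
  have hd1 : Differentiable ℝ f := hf.differentiable (by norm_num)
  have hf' : ContDiff ℝ 1 (deriv f) := (hf.iterate_deriv' 1 1).of_le le_rfl
  have hd2 : Differentiable ℝ (deriv f) := hf'.differentiable one_ne_zero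
  have hibp := intervalIntegral.integral_mul_deriv_eq_deriv_mul
    (u := f) (u' := deriv f) (v := deriv f) (v' := deriv (deriv f))
    (a := (0:ℝ)) (b := 1)
    (fun s _ => (hd1 s).hasDerivAt) (fun s _ => (hd2 s).hasDerivAt)
    ((hf'.continuous).intervalIntegrable _ _)
    ((hf'.continuous_deriv le_rfl).intervalIntegrable _ _)
  have hb1 : f 1 = f 0 := by simpa using hper 0
  have hperd : ∀ y : ℝ, deriv f (y + 1) = deriv f y := by
    intro y
    have : (fun z => f (z + 1)) = f := funext fun z => hper z
    calc deriv f (y + 1) = deriv (fun z => f (z + 1)) y := (deriv_comp_add_const f 1 y).symm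
      _ = deriv f y := by rw [this]
  have hb2 : deriv f 1 = deriv f 0 := by simpa using hperd 0
  have : ∫ t in (0:ℝ)..1, deriv f t * deriv f t = - ∫ t in (0:ℝ)..1, f t * deriv (deriv f) t := by
    rw [hibp, hb1, hb2]; ring
  simpa [pow_two] using this

/-! ### box2 infrastructure -/

lemma box2_subset_Icc : box2 ⊆ Set.univ.pi fun _ : Fin 2 => Set.Icc (0:ℝ) 1 :=
  Set.pi_mono fun i _ => Set.Ico_subset_Icc_self

lemma isCompact_Icc_pi : IsCompact (Set.univ.pi fun _ : Fin 2 => Set.Icc (0:ℝ) 1) :=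
  isCompact_univ_pi fun _ => isCompact_Icc

lemma measurableSet_box2 : MeasurableSet box2 :=
  MeasurableSet.univ_pi fun _ => measurableSet_Ico

lemma integrableOn_box2 {g : (Fin 2 → ℝ) → ℝ} (hg : Continuous g) :
    IntegrableOn g box2 :=
  (hg.continuousOn.integrableOn_compact isCompact_Icc_pi).mono_set box2_subset_Icc

instance : IsFiniteMeasure ((volume : Measure (Fin 2 → ℝ)).restrict box2) := by
  constructor
  rw [Measure.restrict_apply_univ]
  exact lt_of_le_of_lt (measure_mono box2_subset_Icc) isCompact_Icc_pi.measure_lt_top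

lemma box2_preimage :
    box2 = (MeasurableEquiv.finTwoArrow : (Fin 2 → ℝ) ≃ᵐ ℝ × ℝ) ⁻¹'
      (Set.Ico (0:ℝ) 1 ×ˢ Set.Ico (0:ℝ) 1) := by
  ext x
  simp [box2, MeasurableEquiv.finTwoArrow, Fin.forall_fin_two, Set.mem_pi]

lemma cont_pair : Continuous fun p : ℝ × ℝ => (![p.1, p.2] : Fin 2 → ℝ) := by
  apply continuous_pi; intro i; fin_cases i
  · simpa using continuous_fst
  · simpa using continuous_snd

lemma box2_eq_iterated {g : (Fin 2 → ℝ) → ℝ} (hg : Continuous g) :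
    ∫ x in box2, g x = ∫ s in (0:ℝ)..1, ∫ t in (0:ℝ)..1, g ![s, t] := by
  have hmp : MeasurePreserving (MeasurableEquiv.finTwoArrow : (Fin 2 → ℝ) ≃ᵐ ℝ × ℝ)
      volume volume := volume_preserving_finTwoArrow ℝ
  have h1 : ∫ x in box2, g x
      = ∫ p in Set.Ico (0:ℝ) 1 ×ˢ Set.Ico (0:ℝ) 1, g ![p.1, p.2] := by
    rw [box2_preimage]
    have := hmp.setIntegral_preimage_emb
      (MeasurableEquiv.finTwoArrow : (Fin 2 → ℝ) ≃ᵐ ℝ × ℝ).measurableEmbedding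
      (fun p => g ![p.1, p.2]) (Set.Ico (0:ℝ) 1 ×ˢ Set.Ico (0:ℝ) 1)
    rw [← this]
    apply setIntegral_congr_fun ((MeasurableEquiv.finTwoArrow :
      (Fin 2 → ℝ) ≃ᵐ ℝ × ℝ).measurable (measurableSet_Ico.prod measurableSet_Ico))
    intro x _
    congr 1
    funext i; fin_cases i <;> rfl
  have hcont : Continuous fun p : ℝ × ℝ => g ![p.1, p.2] := hg.comp cont_pair
  have hint : IntegrableOn (fun p : ℝ × ℝ => g ![p.1, p.2])
      (Set.Ico (0:ℝ) 1 ×ˢ Set.Ico (0:ℝ) 1) (volume.prod volume) := by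
    have hI : IntegrableOn (fun p : ℝ × ℝ => g ![p.1, p.2])
        (Set.Icc (0:ℝ) 1 ×ˢ Set.Icc (0:ℝ) 1) (volume.prod volume) :=
      (hcont.continuousOn).integrableOn_compact (isCompact_Icc.prod isCompact_Icc)
    exact hI.mono_set (Set.prod_mono Set.Ico_subset_Icc_self Set.Ico_subset_Icc_self)
  rw [h1, Measure.volume_eq_prod, setIntegral_prod _ hint]
  rw [Measure.restrict_congr_set Ico_ae_eq_Ioc, ← intervalIntegral.integral_of_le zero_le_one]
  apply intervalIntegral.integral_congr
  intro s _
  simp [intervalIntegral.integral_of_le zero_le_one]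

lemma iterated_swap {h : ℝ → ℝ → ℝ} (hc : Continuous (Function.uncurry h)) :
    ∫ s in (0:ℝ)..1, ∫ t in (0:ℝ)..1, h s t = ∫ t in (0:ℝ)..1, ∫ s in (0:ℝ)..1, h s t := by
  have hint : Integrable (Function.uncurry h)
      ((volume.restrict (Set.Ioc (0:ℝ) 1)).prod (volume.restrict (Set.Ioc (0:ℝ) 1))) := by
    rw [Measure.prod_restrict]
    have hI : IntegrableOn (Function.uncurry h) (Set.Icc (0:ℝ) 1 ×ˢ Set.Icc (0:ℝ) 1) :=
      (hc.continuousOn).integrableOn_compact (isCompact_Icc.prod isCompact_Icc)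
    exact hI.mono_set (Set.prod_mono Set.Ioc_subset_Icc_self Set.Ioc_subset_Icc_self)
  have := MeasureTheory.integral_integral_swap (f := h) hint
  simpa [intervalIntegral.integral_of_le zero_le_one] using this

/-! ### Cauchy–Schwarz on box2 -/

lemma memL2_box2 {f : (Fin 2 → ℝ) → ℝ} (hf : Continuous f) :
    MemLp f (ENNReal.ofReal 2) ((volume : Measure (Fin 2 → ℝ)).restrict box2) := by
  obtain ⟨C, hC⟩ := isCompact_Icc_pi.exists_bound_of_continuousOn hf.continuousOn
  apply MemLp.of_bound hf.aestronglyMeasurable C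
  filter_upwards [ae_restrict_mem measurableSet_box2] with x hx
  exact hC x (box2_subset_Icc hx)

lemma cs_box2 {f g : (Fin 2 → ℝ) → ℝ} (hf : Continuous f) (hg : Continuous g) :
    ∫ x in box2, |f x| * |g x| ≤
      Real.sqrt (∫ x in box2, f x ^ 2) * Real.sqrt (∫ x in box2, g x ^ 2) := by
  have h := MeasureTheory.integral_mul_norm_le_Lp_mul_Lq
    (μ := (volume : Measure (Fin 2 → ℝ)).restrict box2)
    (f := f) (g := g) (p := 2) (q := 2)
    (by constructor <;> norm_num) (memL2_box2 hf) (memL2_box2 hg)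
  simp only [Real.norm_eq_abs, show (2:ℝ)=((2:ℕ):ℝ) by norm_num, Real.rpow_natCast,
    sq_abs] at h
  rw [Real.sqrt_eq_rpow, Real.sqrt_eq_rpow]
  exact h

/-! ### Partial derivatives -/

def d1 (u : (Fin 2 → ℝ) → ℝ) (x : Fin 2 → ℝ) : ℝ := fderiv ℝ u x ![1, 0]
def d2 (u : (Fin 2 → ℝ) → ℝ) (x : Fin 2 → ℝ) : ℝ := fderiv ℝ u x ![0, 1]
def d11 (u : (Fin 2 → ℝ) → ℝ) (x : Fin 2 → ℝ) : ℝ := fderiv ℝ (fderiv ℝ u) x ![1, 0] ![1, 0]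
def d21 (u : (Fin 2 → ℝ) → ℝ) (x : Fin 2 → ℝ) : ℝ := fderiv ℝ (fderiv ℝ u) x ![0, 1] ![1, 0]
def d22 (u : (Fin 2 → ℝ) → ℝ) (x : Fin 2 → ℝ) : ℝ := fderiv ℝ (fderiv ℝ u) x ![0, 1] ![0, 1]

lemma curve1 (y x : ℝ) : HasDerivAt (fun s : ℝ => (![s, y] : Fin 2 → ℝ)) ![1,0] x := by
  rw [hasDerivAt_pi]
  intro i; fin_cases i
  · simpa using hasDerivAt_id' x
  · simpa using hasDerivAt_const x y

lemma curve2 (x y : ℝ) : HasDerivAt (fun t : ℝ => (![x, t] : Fin 2 → ℝ)) ![0,1] y := by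
  rw [hasDerivAt_pi]
  intro i; fin_cases i
  · simpa using hasDerivAt_const y x
  · simpa using hasDerivAt_id' y

lemma contDiff_curve1 {n : ℕ∞} (y : ℝ) : ContDiff ℝ n fun s : ℝ => (![s, y] : Fin 2 → ℝ) := by
  apply contDiff_pi.2; intro i; fin_cases i
  · simpa using contDiff_fun_id
  · simpa using contDiff_const (c := y)

lemma contDiff_curve2 {n : ℕ∞} (x : ℝ) : ContDiff ℝ n fun t : ℝ => (![x, t] : Fin 2 → ℝ) := by
  apply contDiff_pi.2; intro i; fin_cases i
  · simpa using contDiff_const (c := x)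
  · simpa using contDiff_fun_id

variable {u : (Fin 2 → ℝ) → ℝ}

section
variable (hu : ContDiff ℝ 2 u)
include hu

lemma slice1 (y x : ℝ) : HasDerivAt (fun s => u ![s, y]) (d1 u ![x, y]) x :=
  (hu.differentiable (by norm_num) _).hasFDerivAt.comp_hasDerivAt x (curve1 y x)

lemma slice2 (x y : ℝ) : HasDerivAt (fun t => u ![x, t]) (d2 u ![x, y]) y :=
  (hu.differentiable (by norm_num) _).hasFDerivAt.comp_hasDerivAt y (curve2 x y)

lemma fd_cd : ContDiff ℝ 1 (fderiv ℝ u) := hu.fderiv_right (le_refl 2)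

lemma d1_cd : ContDiff ℝ 1 (d1 u) := (fd_cd hu).clm_apply contDiff_const
lemma d2_cd : ContDiff ℝ 1 (d2 u) := (fd_cd hu).clm_apply contDiff_const

lemma ffd_cont : Continuous (fderiv ℝ (fderiv ℝ u)) :=
  (fd_cd hu).continuous_fderiv one_ne_zero

lemma d11_cont : Continuous (d11 u) :=
  (((ffd_cont hu).clm_apply continuous_const).clm_apply continuous_const)
lemma d21_cont : Continuous (d21 u) :=
  (((ffd_cont hu).clm_apply continuous_const).clm_apply continuous_const)
lemma d22_cont : Continuous (d22 u) :=
  (((ffd_cont hu).clm_apply continuous_const).clm_apply continuous_const)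

lemma slice1' (y x : ℝ) : HasDerivAt (fun s => d1 u ![s, y]) (d11 u ![x, y]) x := by
  have h : HasDerivAt (fun s : ℝ => fderiv ℝ u ![s, y])
      (fderiv ℝ (fderiv ℝ u) ![x, y] ![1,0]) x :=
    (((fd_cd hu).differentiable one_ne_zero) _).hasFDerivAt.comp_hasDerivAt x (curve1 y x)
  have := h.clm_apply (hasDerivAt_const x (![1,0] : Fin 2 → ℝ))
  simpa [d1, d11] using this

lemma slice2' (x y : ℝ) : HasDerivAt (fun t => d1 u ![x, t]) (d21 u ![x, y]) y := by
  have h : HasDerivAt (fun t : ℝ => fderiv ℝ u ![x, t])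
      (fderiv ℝ (fderiv ℝ u) ![x, y] ![0,1]) y :=
    (((fd_cd hu).differentiable one_ne_zero) _).hasFDerivAt.comp_hasDerivAt y (curve2 x y)
  have := h.clm_apply (hasDerivAt_const y (![1,0] : Fin 2 → ℝ))
  simpa [d1, d21] using this

lemma slice2'' (x y : ℝ) : HasDerivAt (fun t => d2 u ![x, t]) (d22 u ![x, y]) y := by
  have h : HasDerivAt (fun t : ℝ => fderiv ℝ u ![x, t])
      (fderiv ℝ (fderiv ℝ u) ![x, y] ![0,1]) y :=
    (((fd_cd hu).differentiable one_ne_zero) _).hasFDerivAt.comp_hasDerivAt y (curve2 x y)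
  have := h.clm_apply (hasDerivAt_const y (![0,1] : Fin 2 → ℝ))
  simpa [d2, d22] using this

end

lemma norm_e0_le : ‖(![1,0] : Fin 2 → ℝ)‖ ≤ 1 := by
  apply pi_norm_le_iff_of_nonneg zero_le_one |>.2
  intro i; fin_cases i <;> simp

lemma norm_e1_le : ‖(![0,1] : Fin 2 → ℝ)‖ ≤ 1 := by
  apply pi_norm_le_iff_of_nonneg zero_le_one |>.2
  intro i; fin_cases i <;> simp

lemma abs_second_le {a b : Fin 2 → ℝ} (ha : ‖a‖ ≤ 1) (hb : ‖b‖ ≤ 1) (x : Fin 2 → ℝ) :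
    |fderiv ℝ (fderiv ℝ u) x a b| ≤ ‖iteratedFDeriv ℝ 2 u x‖ := by
  have h : iteratedFDeriv ℝ 2 u x ![a, b] = fderiv ℝ (fderiv ℝ u) x a b := by
    rw [iteratedFDeriv_two_apply]; rfl
  rw [← h, ← Real.norm_eq_abs]
  calc ‖iteratedFDeriv ℝ 2 u x ![a, b]‖
      ≤ ‖iteratedFDeriv ℝ 2 u x‖ * ∏ i, ‖(![a, b] : Fin 2 → Fin 2 → ℝ) i‖ :=
        ContinuousMultilinearMap.le_opNorm _ _
    _ ≤ ‖iteratedFDeriv ℝ 2 u x‖ * 1 := by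
        apply mul_le_mul_of_nonneg_left _ (norm_nonneg _)
        calc ∏ i, ‖(![a, b] : Fin 2 → Fin 2 → ℝ) i‖ = ‖a‖ * ‖b‖ := by
              rw [Fin.prod_univ_two]; simp
          _ ≤ 1 * 1 := mul_le_mul ha hb (norm_nonneg _) zero_le_one
          _ = 1 := one_mul 1
    _ = _ := mul_one _

/-! ### Periodicity helpers -/

lemma per_slice1 (hp : IsPeriodic2 u) (y : ℝ) : Function.Periodic (fun s => u ![s, y]) 1 := by
  intro s
  have h := hp ![s, y] ![1, 0]
  have he : (![s, y] + fun i => ((![1,0] : Fin 2 → ℤ) i : ℝ)) = ![s + 1, y] := by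
    funext i; fin_cases i <;> simp
  rw [he] at h
  exact h

lemma per_slice2 (hp : IsPeriodic2 u) (x : ℝ) : Function.Periodic (fun t => u ![x, t]) 1 := by
  intro t
  have h := hp ![x, t] ![0, 1]
  have he : (![x, t] + fun i => ((![0,1] : Fin 2 → ℤ) i : ℝ)) = ![x, t + 1] := by
    funext i; fin_cases i <;> simp
  rw [he] at h
  exact h

lemma reduce_to_box (hp : IsPeriodic2 u) (x : Fin 2 → ℝ) :
    ∃ y : Fin 2 → ℝ, (∀ i, y i ∈ Set.Icc (0:ℝ) 1) ∧ u x = u y := by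
  refine ⟨fun i => Int.fract (x i), fun i => ⟨Int.fract_nonneg _, (Int.fract_lt_one _).le⟩, ?_⟩
  have h := hp (fun i => Int.fract (x i)) (fun i => ⌊x i⌋)
  have he : ((fun i => Int.fract (x i)) + fun i => ((⌊x i⌋ : ℤ) : ℝ)) = x := by
    funext i
    simp only [Pi.add_apply]
    exact Int.fract_add_floor (x i)
  rw [he] at h
  exact h
/-! ### The 2D pointwise bound -/

lemma cont_param {G : (Fin 2 → ℝ) → ℝ} (hG : Continuous G) :
    Continuous fun s : ℝ => ∫ t in (0:ℝ)..1, G ![s, t] := by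
  apply intervalIntegral.continuous_parametric_intervalIntegral_of_continuous'
    (μ := volume) (f := fun s t => G ![s, t])
  exact hG.comp cont_pair

lemma cont_slice1 {G : (Fin 2 → ℝ) → ℝ} (hG : Continuous G) (y : ℝ) :
    Continuous fun s : ℝ => G ![s, y] :=
  hG.comp (contDiff_curve1 (n := 1) y).continuous

lemma pointwise_2d (hu : ContDiff ℝ 2 u) {x y : ℝ}
    (hx : x ∈ Set.Icc (0:ℝ) 1) (hy : y ∈ Set.Icc (0:ℝ) 1) :
    (u ![x, y])^2 ≤ (∫ z in box2, (u z)^2) + (∫ z in box2, |2*(u z * d2 u z)|)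
      + (∫ z in box2, |2*(u z * d1 u z)|)
      + ∫ z in box2, |2*(d2 u z * d1 u z + u z * d21 u z)| := by
  have hc_u : Continuous u := hu.continuous
  have hc1 : Continuous (d1 u) := (d1_cd hu).continuous
  have hc2 : Continuous (d2 u) := (d2_cd hu).continuous
  have hc21 : Continuous (d21 u) := d21_cont hu
  have hcA : Continuous fun z => |(u z)^2| := (hc_u.pow 2).abs
  have hcB : Continuous fun z => |2*(u z * d2 u z)| :=
    ((continuous_const.mul (hc_u.mul hc2))).abs
  have hcC : Continuous fun z => |2*(u z * d1 u z)| :=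
    ((continuous_const.mul (hc_u.mul hc1))).abs
  have hcD : Continuous fun z => |2*(d2 u z * d1 u z + u z * d21 u z)| :=
    ((continuous_const.mul ((hc2.mul hc1).add (hc_u.mul hc21)))).abs
  have cdA : ∀ y' : ℝ, ContDiff ℝ 1 fun s => (u ![s, y'])^2 := fun y' =>
    (((hu.of_le (by norm_num)).comp (contDiff_curve1 y')).pow 2)
  have cdB : ∀ s : ℝ, ContDiff ℝ 1 fun t => (u ![s, t])^2 := fun s =>
    (((hu.of_le (by norm_num)).comp (contDiff_curve2 s)).pow 2)
  have cdC : ∀ s : ℝ, ContDiff ℝ 1 fun t => 2*(u ![s, t] * d1 u ![s, t]) := fun s =>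
    contDiff_const.mul (((hu.of_le (by norm_num)).comp (contDiff_curve2 s)).mul
      ((d1_cd hu).comp (contDiff_curve2 s)))
  have dA : ∀ y' : ℝ, deriv (fun s => (u ![s, y'])^2)
      = fun s => 2*(u ![s, y'] * d1 u ![s, y']) := by
    intro y'; funext s
    rw [((slice1 hu y' s).fun_pow 2).deriv]
    ring
  have dB : ∀ s : ℝ, deriv (fun t => (u ![s, t])^2)
      = fun t => 2*(u ![s, t] * d2 u ![s, t]) := by
    intro s; funext t
    rw [((slice2 hu s t).fun_pow 2).deriv]
    ring
  have dC : ∀ s : ℝ, deriv (fun t => 2*(u ![s, t] * d1 u ![s, t]))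
      = fun t => 2*(d2 u ![s, t] * d1 u ![s, t] + u ![s, t] * d21 u ![s, t]) := by
    intro s; funext t
    rw [(((slice2 hu s t).fun_mul (slice2' hu s t)).const_mul 2).deriv]
  have h1 : (u ![x, y])^2 ≤ (∫ s in (0:ℝ)..1, |(u ![s, y])^2|)
      + ∫ s in (0:ℝ)..1, |2*(u ![s, y] * d1 u ![s, y])| := by
    have h := oned_bound (cdA y) hx
    rw [dA y] at h
    calc (u ![x, y])^2 = |(u ![x, y])^2| := (abs_of_nonneg (sq_nonneg _)).symm
      _ ≤ _ := h
  have h2 : ∀ s : ℝ, |(u ![s, y])^2| ≤ (∫ t in (0:ℝ)..1, |(u ![s, t])^2|)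
      + ∫ t in (0:ℝ)..1, |2*(u ![s, t] * d2 u ![s, t])| := by
    intro s
    have h := oned_bound (cdB s) hy
    rw [dB s] at h
    exact h
  have h3 : ∀ s : ℝ, |2*(u ![s, y] * d1 u ![s, y])|
      ≤ (∫ t in (0:ℝ)..1, |2*(u ![s, t] * d1 u ![s, t])|)
      + ∫ t in (0:ℝ)..1, |2*(d2 u ![s, t] * d1 u ![s, t] + u ![s, t] * d21 u ![s, t])| := by
    intro s
    have h := oned_bound (cdC s) hy
    rw [dC s] at h
    exact h
  have contA : Continuous fun s : ℝ => ∫ t in (0:ℝ)..1, |(u ![s, t])^2| := cont_param hcA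
  have contB : Continuous fun s : ℝ => ∫ t in (0:ℝ)..1, |2*(u ![s, t] * d2 u ![s, t])| :=
    cont_param hcB
  have contC : Continuous fun s : ℝ => ∫ t in (0:ℝ)..1, |2*(u ![s, t] * d1 u ![s, t])| :=
    cont_param hcC
  have contD : Continuous fun s : ℝ =>
      ∫ t in (0:ℝ)..1, |2*(d2 u ![s, t] * d1 u ![s, t] + u ![s, t] * d21 u ![s, t])| :=
    cont_param hcD
  have int1 : (∫ s in (0:ℝ)..1, |(u ![s, y])^2|)
      ≤ (∫ s in (0:ℝ)..1, ∫ t in (0:ℝ)..1, |(u ![s, t])^2|)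
      + ∫ s in (0:ℝ)..1, ∫ t in (0:ℝ)..1, |2*(u ![s, t] * d2 u ![s, t])| := by
    have mono := intervalIntegral.integral_mono_on (μ := volume) zero_le_one
      ((cont_slice1 hcA y).intervalIntegrable _ _)
      ((contA.fun_add contB).intervalIntegrable _ _)
      (fun s _ => h2 s)
    rwa [intervalIntegral.integral_add (contA.intervalIntegrable _ _)
      (contB.intervalIntegrable _ _)] at mono
  have int2 : (∫ s in (0:ℝ)..1, |2*(u ![s, y] * d1 u ![s, y])|)
      ≤ (∫ s in (0:ℝ)..1, ∫ t in (0:ℝ)..1, |2*(u ![s, t] * d1 u ![s, t])|)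
      + ∫ s in (0:ℝ)..1, ∫ t in (0:ℝ)..1,
          |2*(d2 u ![s, t] * d1 u ![s, t] + u ![s, t] * d21 u ![s, t])| := by
    have mono := intervalIntegral.integral_mono_on (μ := volume) zero_le_one
      ((cont_slice1 hcC y).intervalIntegrable _ _)
      ((contC.fun_add contD).intervalIntegrable _ _)
      (fun s _ => h3 s)
    rwa [intervalIntegral.integral_add (contC.intervalIntegrable _ _)
      (contD.intervalIntegrable _ _)] at mono
  have eA : ∫ z in box2, (u z)^2
      = ∫ s in (0:ℝ)..1, ∫ t in (0:ℝ)..1, |(u ![s, t])^2| := by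
    have e0 : ∫ z in box2, (u z)^2 = ∫ z in box2, |(u z)^2| := by
      apply setIntegral_congr_fun measurableSet_box2
      intro z _
      exact (abs_of_nonneg (sq_nonneg _)).symm
    rw [e0]
    exact box2_eq_iterated hcA
  have eB : ∫ z in box2, |2*(u z * d2 u z)|
      = ∫ s in (0:ℝ)..1, ∫ t in (0:ℝ)..1, |2*(u ![s, t] * d2 u ![s, t])| :=
    box2_eq_iterated hcB
  have eC : ∫ z in box2, |2*(u z * d1 u z)|
      = ∫ s in (0:ℝ)..1, ∫ t in (0:ℝ)..1, |2*(u ![s, t] * d1 u ![s, t])| :=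
    box2_eq_iterated hcC
  have eD : ∫ z in box2, |2*(d2 u z * d1 u z + u z * d21 u z)|
      = ∫ s in (0:ℝ)..1, ∫ t in (0:ℝ)..1,
          |2*(d2 u ![s, t] * d1 u ![s, t] + u ![s, t] * d21 u ![s, t])| :=
    box2_eq_iterated hcD
  rw [eA, eB, eC, eD]
  calc (u ![x, y])^2 ≤ _ := h1
    _ ≤ _ := add_le_add int1 int2
    _ = _ := by ring

/-! ### Integration by parts -/

lemma ibp_2 (hu : ContDiff ℝ 2 u) (hp : IsPeriodic2 u) :
    ∫ z in box2, (d2 u z)^2 ≤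
      Real.sqrt (∫ z in box2, (u z)^2) * Real.sqrt (∫ z in box2, (d22 u z)^2) := by
  have hc_u : Continuous u := hu.continuous
  have hc2 : Continuous (d2 u) := (d2_cd hu).continuous
  have hc22 : Continuous (d22 u) := d22_cont hu
  have e1 : ∫ z in box2, (d2 u z)^2
      = ∫ s in (0:ℝ)..1, ∫ t in (0:ℝ)..1, (d2 u ![s, t])^2 :=
    box2_eq_iterated (hc2.pow 2)
  have inner : ∀ s : ℝ, ∫ t in (0:ℝ)..1, (d2 u ![s, t])^2
      = - ∫ t in (0:ℝ)..1, u ![s, t] * d22 u ![s, t] := by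
    intro s
    have hf : ContDiff ℝ 2 fun t => u ![s, t] := hu.comp (contDiff_curve2 s)
    have hder : deriv (fun t => u ![s, t]) = fun t => d2 u ![s, t] :=
      funext fun t => (slice2 hu s t).deriv
    have hder2 : deriv (deriv (fun t => u ![s, t])) = fun t => d22 u ![s, t] := by
      rw [hder]
      exact funext fun t => (slice2'' hu s t).deriv
    have h := oned_ibp hf (per_slice2 hp s)
    rw [hder2, hder] at h
    simpa using h
  have e2 : ∫ z in box2, (d2 u z)^2 = - ∫ z in box2, u z * d22 u z := by
    rw [e1, intervalIntegral.integral_congr (fun s _ => inner s),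
      intervalIntegral.integral_neg, ← box2_eq_iterated (hc_u.fun_mul hc22)]
  rw [e2]
  calc - ∫ z in box2, u z * d22 u z ≤ |∫ z in box2, u z * d22 u z| := neg_le_abs _
    _ ≤ ∫ z in box2, |u z| * |d22 u z| := by
        simpa [Real.norm_eq_abs, abs_mul] using
          norm_integral_le_integral_norm (μ := volume.restrict box2) (fun z => u z * d22 u z)
    _ ≤ _ := cs_box2 hc_u hc22

lemma ibp_1 (hu : ContDiff ℝ 2 u) (hp : IsPeriodic2 u) :
    ∫ z in box2, (d1 u z)^2 ≤
      Real.sqrt (∫ z in box2, (u z)^2) * Real.sqrt (∫ z in box2, (d11 u z)^2) := by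
  have hc_u : Continuous u := hu.continuous
  have hc1 : Continuous (d1 u) := (d1_cd hu).continuous
  have hc11 : Continuous (d11 u) := d11_cont hu
  have e1 : ∫ z in box2, (d1 u z)^2
      = ∫ s in (0:ℝ)..1, ∫ t in (0:ℝ)..1, (d1 u ![s, t])^2 :=
    box2_eq_iterated (hc1.pow 2)
  have e1' : ∫ s in (0:ℝ)..1, ∫ t in (0:ℝ)..1, (d1 u ![s, t])^2
      = ∫ t in (0:ℝ)..1, ∫ s in (0:ℝ)..1, (d1 u ![s, t])^2 :=
    iterated_swap (h := fun s t => (d1 u ![s, t])^2) ((hc1.pow 2).comp cont_pair)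
  have inner : ∀ t : ℝ, ∫ s in (0:ℝ)..1, (d1 u ![s, t])^2
      = - ∫ s in (0:ℝ)..1, u ![s, t] * d11 u ![s, t] := by
    intro t
    have hf : ContDiff ℝ 2 fun s => u ![s, t] := hu.comp (contDiff_curve1 t)
    have hder : deriv (fun s => u ![s, t]) = fun s => d1 u ![s, t] :=
      funext fun s => (slice1 hu t s).deriv
    have hder2 : deriv (deriv (fun s => u ![s, t])) = fun s => d11 u ![s, t] := by
      rw [hder]
      exact funext fun s => (slice1' hu t s).deriv
    have h := oned_ibp hf (per_slice1 hp t)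
    rw [hder2, hder] at h
    simpa using h
  have e2 : ∫ z in box2, (d1 u z)^2 = - ∫ z in box2, u z * d11 u z := by
    rw [e1, e1', intervalIntegral.integral_congr (fun t _ => inner t),
      intervalIntegral.integral_neg,
      ← iterated_swap (h := fun s t => u ![s, t] * d11 u ![s, t]) ((hc_u.mul hc11).comp cont_pair),
      ← box2_eq_iterated (hc_u.fun_mul hc11)]
  rw [e2]
  calc - ∫ z in box2, u z * d11 u z ≤ |∫ z in box2, u z * d11 u z| := neg_le_abs _
    _ ≤ ∫ z in box2, |u z| * |d11 u z| := by
        simpa [Real.norm_eq_abs, abs_mul] using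
          norm_integral_le_integral_norm (μ := volume.restrict box2) (fun z => u z * d11 u z)
    _ ≤ _ := cs_box2 hc_u hc11

/-! ### Final pointwise bound and main theorem -/

lemma final_bound (hu : ContDiff ℝ 2 u) (hp : IsPeriodic2 u) (p : Fin 2 → ℝ) :
    |u p| ≤ 3 * L2Norm2 u ^ ((1:ℝ)/2) * H2Norm2 u ^ ((1:ℝ)/2) := by
  obtain ⟨q, hq, hpq⟩ := reduce_to_box hp p
  have hc_u : Continuous u := hu.continuous
  have hc1 : Continuous (d1 u) := (d1_cd hu).continuous
  have hc2 : Continuous (d2 u) := (d2_cd hu).continuous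
  have hc11 : Continuous (d11 u) := d11_cont hu
  have hc21 : Continuous (d21 u) := d21_cont hu
  have hc22 : Continuous (d22 u) := d22_cont hu
  have hcF2 : Continuous fun z => ‖iteratedFDeriv ℝ 2 u z‖ :=
    (hu.continuous_iteratedFDeriv (by norm_num)).norm
  -- nonnegativity
  have hS0 : 0 ≤ ∫ z in box2, (u z)^2 :=
    setIntegral_nonneg measurableSet_box2 fun z _ => sq_nonneg _
  have hT1nn : 0 ≤ ∫ z in box2, ‖iteratedFDeriv ℝ 1 u z‖^2 :=
    setIntegral_nonneg measurableSet_box2 fun z _ => sq_nonneg _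
  have hT2nn : 0 ≤ ∫ z in box2, ‖iteratedFDeriv ℝ 2 u z‖^2 :=
    setIntegral_nonneg measurableSet_box2 fun z _ => sq_nonneg _
  -- norms as square roots
  have hL : L2Norm2 u = Real.sqrt (∫ z in box2, (u z)^2) := by
    rw [L2Norm2, ← Real.sqrt_eq_rpow]
  have e0 : (∫ z in box2, ‖iteratedFDeriv ℝ 0 u z‖^2) = ∫ z in box2, (u z)^2 := by
    simp only [norm_iteratedFDeriv_zero, Real.norm_eq_abs, sq_abs]
  have hH : H2Norm2 u = Real.sqrt ((∫ z in box2, (u z)^2)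
      + (∫ z in box2, ‖iteratedFDeriv ℝ 1 u z‖^2)
      + (∫ z in box2, ‖iteratedFDeriv ℝ 2 u z‖^2)) := by
    rw [H2Norm2, Finset.sum_range_succ, Finset.sum_range_succ, Finset.sum_range_one, e0,
      ← Real.sqrt_eq_rpow]
  set a := Real.sqrt (∫ z in box2, (u z)^2) with ha
  set b := Real.sqrt ((∫ z in box2, (u z)^2)
      + (∫ z in box2, ‖iteratedFDeriv ℝ 1 u z‖^2)
      + (∫ z in box2, ‖iteratedFDeriv ℝ 2 u z‖^2)) with hb
  have ha0 : 0 ≤ a := Real.sqrt_nonneg _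
  have hb0 : 0 ≤ b := Real.sqrt_nonneg _
  have hab : a ≤ b := Real.sqrt_le_sqrt (by linarith)
  -- second derivative L² bounds
  have hsecond : ∀ (d : (Fin 2 → ℝ) → ℝ), Continuous d →
      (∀ z, |d z| ≤ ‖iteratedFDeriv ℝ 2 u z‖) →
      Real.sqrt (∫ z in box2, (d z)^2) ≤ b := by
    intro d hcd hptw
    have hint : (∫ z in box2, (d z)^2) ≤ ∫ z in box2, ‖iteratedFDeriv ℝ 2 u z‖^2 := by
      apply setIntegral_mono_on (integrableOn_box2 (hcd.pow 2))
        (integrableOn_box2 (hcF2.pow 2)) measurableSet_box2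
      intro z _
      calc (d z)^2 = |d z|^2 := (sq_abs _).symm
        _ ≤ ‖iteratedFDeriv ℝ 2 u z‖^2 := pow_le_pow_left₀ (abs_nonneg _) (hptw z) 2
    exact Real.sqrt_le_sqrt (by linarith)
  have hQ11 : Real.sqrt (∫ z in box2, (d11 u z)^2) ≤ b :=
    hsecond _ hc11 fun z => abs_second_le norm_e0_le norm_e0_le z
  have hQ21 : Real.sqrt (∫ z in box2, (d21 u z)^2) ≤ b :=
    hsecond _ hc21 fun z => abs_second_le norm_e1_le norm_e0_le z
  have hQ22 : Real.sqrt (∫ z in box2, (d22 u z)^2) ≤ b :=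
    hsecond _ hc22 fun z => abs_second_le norm_e1_le norm_e1_le z
  -- first derivative interpolation via IBP
  have hD1 : (∫ z in box2, (d1 u z)^2) ≤ a * b := by
    calc (∫ z in box2, (d1 u z)^2) ≤ a * Real.sqrt (∫ z in box2, (d11 u z)^2) := ibp_1 hu hp
      _ ≤ a * b := mul_le_mul_of_nonneg_left hQ11 ha0
  have hD2 : (∫ z in box2, (d2 u z)^2) ≤ a * b := by
    calc (∫ z in box2, (d2 u z)^2) ≤ a * Real.sqrt (∫ z in box2, (d22 u z)^2) := ibp_2 hu hp
      _ ≤ a * b := mul_le_mul_of_nonneg_left hQ22 ha0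
  have hab0 : 0 ≤ a * b := mul_nonneg ha0 hb0
  have hsD1 : Real.sqrt (∫ z in box2, (d1 u z)^2) ≤ Real.sqrt (a*b) := Real.sqrt_le_sqrt hD1
  have hsD2 : Real.sqrt (∫ z in box2, (d2 u z)^2) ≤ Real.sqrt (a*b) := Real.sqrt_le_sqrt hD2
  have hsab : Real.sqrt (a*b) ≤ b := by
    calc Real.sqrt (a*b) ≤ Real.sqrt (b*b) :=
          Real.sqrt_le_sqrt (mul_le_mul_of_nonneg_right hab hb0)
      _ = b := Real.sqrt_mul_self hb0
  have hsD1b : Real.sqrt (∫ z in box2, (d1 u z)^2) ≤ b := hsD1.trans hsab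
  have hsD2b : Real.sqrt (∫ z in box2, (d2 u z)^2) ≤ b := hsD2.trans hsab
  have hsD1nn : 0 ≤ Real.sqrt (∫ z in box2, (d1 u z)^2) := Real.sqrt_nonneg _
  have hsD2nn : 0 ≤ Real.sqrt (∫ z in box2, (d2 u z)^2) := Real.sqrt_nonneg _
  -- the four terms in the pointwise bound
  have hTermA : (∫ z in box2, (u z)^2) ≤ a * b := by
    have : (∫ z in box2, (u z)^2) = a * a := (Real.mul_self_sqrt hS0).symm
    rw [this]
    exact mul_le_mul_of_nonneg_left hab ha0
  have hTermB : (∫ z in box2, |2*(u z * d2 u z)|) ≤ 2*(a*b) := by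
    have e : ∀ z : Fin 2 → ℝ, |2*(u z * d2 u z)| = 2*(|u z| * |d2 u z|) := by
      intro z; rw [abs_mul, abs_mul, abs_two]
    calc (∫ z in box2, |2*(u z * d2 u z)|) = ∫ z in box2, 2*(|u z| * |d2 u z|) :=
          setIntegral_congr_fun measurableSet_box2 fun z _ => e z
      _ = 2 * ∫ z in box2, |u z| * |d2 u z| := integral_const_mul 2 _
      _ ≤ 2 * (a * Real.sqrt (∫ z in box2, (d2 u z)^2)) := by
          have := cs_box2 hc_u hc2
          linarith
      _ ≤ 2*(a*b) := by
          have := mul_le_mul_of_nonneg_left hsD2b ha0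
          linarith
  have hTermC : (∫ z in box2, |2*(u z * d1 u z)|) ≤ 2*(a*b) := by
    have e : ∀ z : Fin 2 → ℝ, |2*(u z * d1 u z)| = 2*(|u z| * |d1 u z|) := by
      intro z; rw [abs_mul, abs_mul, abs_two]
    calc (∫ z in box2, |2*(u z * d1 u z)|) = ∫ z in box2, 2*(|u z| * |d1 u z|) :=
          setIntegral_congr_fun measurableSet_box2 fun z _ => e z
      _ = 2 * ∫ z in box2, |u z| * |d1 u z| := integral_const_mul 2 _
      _ ≤ 2 * (a * Real.sqrt (∫ z in box2, (d1 u z)^2)) := by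
          have := cs_box2 hc_u hc1
          linarith
      _ ≤ 2*(a*b) := by
          have := mul_le_mul_of_nonneg_left hsD1b ha0
          linarith
  have hTermD : (∫ z in box2, |2*(d2 u z * d1 u z + u z * d21 u z)|) ≤ 4*(a*b) := by
    have e : ∀ z : Fin 2 → ℝ, |2*(d2 u z * d1 u z + u z * d21 u z)|
        ≤ 2*(|d2 u z| * |d1 u z|) + 2*(|u z| * |d21 u z|) := by
      intro z
      rw [abs_mul, abs_two]
      calc 2 * |d2 u z * d1 u z + u z * d21 u z|
          ≤ 2 * (|d2 u z * d1 u z| + |u z * d21 u z|) := by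
            have := abs_add_le (d2 u z * d1 u z) (u z * d21 u z)
            linarith
        _ = 2*(|d2 u z| * |d1 u z|) + 2*(|u z| * |d21 u z|) := by
            rw [abs_mul, abs_mul]; ring
    have step1 : (∫ z in box2, |2*(d2 u z * d1 u z + u z * d21 u z)|)
        ≤ ∫ z in box2, (2*(|d2 u z| * |d1 u z|) + 2*(|u z| * |d21 u z|)) := by
      apply setIntegral_mono_on
        (integrableOn_box2 ((continuous_const.mul ((hc2.mul hc1).add (hc_u.mul hc21))).abs))
        (integrableOn_box2 ((continuous_const.mul (hc2.abs.mul hc1.abs)).add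
          (continuous_const.mul (hc_u.abs.mul hc21.abs))))
        measurableSet_box2
      intro z _
      exact e z
    have step2 : (∫ z in box2, (2*(|d2 u z| * |d1 u z|) + 2*(|u z| * |d21 u z|)))
        = 2*(∫ z in box2, |d2 u z| * |d1 u z|) + 2*(∫ z in box2, |u z| * |d21 u z|) := by
      rw [integral_add (integrableOn_box2 (continuous_const.fun_mul (hc2.abs.fun_mul hc1.abs)))
        (integrableOn_box2 (continuous_const.fun_mul (hc_u.abs.fun_mul hc21.abs))),
        integral_const_mul, integral_const_mul]
    have csA : (∫ z in box2, |d2 u z| * |d1 u z|)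
        ≤ Real.sqrt (∫ z in box2, (d2 u z)^2) * Real.sqrt (∫ z in box2, (d1 u z)^2) :=
      cs_box2 hc2 hc1
    have csB : (∫ z in box2, |u z| * |d21 u z|)
        ≤ a * Real.sqrt (∫ z in box2, (d21 u z)^2) := cs_box2 hc_u hc21
    have hDD : Real.sqrt (∫ z in box2, (d2 u z)^2) * Real.sqrt (∫ z in box2, (d1 u z)^2)
        ≤ a * b := by
      calc Real.sqrt (∫ z in box2, (d2 u z)^2) * Real.sqrt (∫ z in box2, (d1 u z)^2)
          ≤ Real.sqrt (a*b) * Real.sqrt (a*b) :=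
            mul_le_mul hsD2 hsD1 hsD1nn (Real.sqrt_nonneg _)
        _ = a * b := Real.mul_self_sqrt hab0
    have hUQ : a * Real.sqrt (∫ z in box2, (d21 u z)^2) ≤ a * b :=
      mul_le_mul_of_nonneg_left hQ21 ha0
    calc (∫ z in box2, |2*(d2 u z * d1 u z + u z * d21 u z)|) ≤ _ := step1
      _ = _ := step2
      _ ≤ 2*(a*b) + 2*(a*b) := by linarith
      _ = 4*(a*b) := by ring
  -- combine
  have hqeq : q = ![q 0, q 1] := by
    funext i; fin_cases i <;> rfl
  have hpt := pointwise_2d hu (hq 0) (hq 1)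
  have hsq : (u q)^2 ≤ 9*(a*b) := by
    rw [hqeq]
    linarith
  have habs : |u q| ≤ 3 * Real.sqrt (a*b) := by
    calc |u q| = Real.sqrt ((u q)^2) := (Real.sqrt_sq_eq_abs _).symm
      _ ≤ Real.sqrt (9*(a*b)) := Real.sqrt_le_sqrt hsq
      _ = Real.sqrt 9 * Real.sqrt (a*b) := Real.sqrt_mul (by norm_num) _
      _ = 3 * Real.sqrt (a*b) := by
          rw [show (9:ℝ) = 3^2 by norm_num, Real.sqrt_sq (by norm_num : (0:ℝ) ≤ 3)]
  have hfinal : |u p| ≤ 3 * Real.sqrt a * Real.sqrt b := by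
    rw [hpq]
    calc |u q| ≤ 3 * Real.sqrt (a*b) := habs
      _ = 3 * Real.sqrt a * Real.sqrt b := by rw [Real.sqrt_mul ha0]; ring
  rw [hL, hH, Real.sqrt_eq_rpow a, Real.sqrt_eq_rpow b] at *
  exact hfinal

/-- The two-dimensional Agmon inequality:
`‖u‖_{L∞} ≤ C ‖u‖_{L²}^{1/2} ‖u‖_{H²}^{1/2}` on `T²`, with `C` independent of `u`. -/
theorem agmon_inequality_dim2 :
    ∃ C : ℝ, 0 < C ∧ ∀ u : (Fin 2 → ℝ) → ℝ, ContDiff ℝ 2 u → IsPeriodic2 u →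
      LinfNorm2 u ≤ C * L2Norm2 u ^ ((1 : ℝ) / 2) * H2Norm2 u ^ ((1 : ℝ) / 2) := by
  refine ⟨3, by norm_num, fun u hu hp => ?_⟩
  have hS0 : 0 ≤ ∫ z in box2, (u z)^2 :=
    setIntegral_nonneg measurableSet_box2 fun z _ => sq_nonneg _
  have hL0 : 0 ≤ L2Norm2 u := Real.rpow_nonneg hS0 _
  have hsum0 : 0 ≤ ∑ k ∈ Finset.range 3, ∫ x in box2, ‖iteratedFDeriv ℝ k u x‖ ^ 2 :=
    Finset.sum_nonneg fun k _ =>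
      setIntegral_nonneg measurableSet_box2 fun z _ => sq_nonneg _
  have hH0 : 0 ≤ H2Norm2 u := Real.rpow_nonneg hsum0 _
  have hrhs : 0 ≤ 3 * L2Norm2 u ^ ((1:ℝ)/2) * H2Norm2 u ^ ((1:ℝ)/2) := by
    apply mul_nonneg (mul_nonneg (by norm_num) (Real.rpow_nonneg hL0 _))
      (Real.rpow_nonneg hH0 _)
  exact Real.iSup_le (fun p => final_bound hu hp p) hrhs
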